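/- Under the stated hypotheses, the Long–Moody matrices satisfy the braid relation: S_i S_{i+1} S_i = S_{i+1} S_i S_{i+1} for all 1 ≤ i ≤ n−2. -/
import Mathlib
set_option maxHeartbeats 1000000
set_option linter.unusedSectionVars false


open Matrix

namespace KLM

variable {k : Type*} [Field k]

/-- Assemble an `Nn × Nn` matrix from an `n × n` array of `N × N` blocks,
blocks being indexed by natural numbers (only indices `< n` are relevant). -/
def blk (n N : ℕ) (B : ℕ → ℕ → Matrix (Fin N) (Fin N) k) :
    Matrix (Fin n × Fin N) (Fin n × Fin N) k :=
  Matrix.of fun p q => B p.1.1 q.1.1 p.2 q.2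

/-- The Dettweiler–Reiter convolution matrix `G_j = ρ^{DR}_λ(x_j)` (0-based index `j`):
the identity except that the `j`-th block row is
`(λ(g_0−1), …, λ(g_{j−1}−1), λ g_j, g_{j+1}−1, …, g_{n−1}−1)`. -/
def G (n N : ℕ) (g : ℕ → Matrix (Fin N) (Fin N) k) (lam : k) (j : ℕ) :
    Matrix (Fin n × Fin N) (Fin n × Fin N) k :=
  blk n N fun r c =>
    if r = j then
      (if c < j then lam • (g c - 1) else if c = j then lam • g j else g c - 1)
    else if r = c then 1 else 0

/-- The Long–Moody matrix `S_i = ρ^{LM}(σ_i)` (0-based index `i`):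
`(s_i ⊕ ⋯ ⊕ s_i) · diag(1, …, 1, R_i, 1, …, 1)` where `R_i` is the
`2×2` block matrix with rows `(0, g_i)` and `(1, 1 − g_{i+1})`
placed in block rows/columns `i, i+1`. -/
def S (n N : ℕ) (g s : ℕ → Matrix (Fin N) (Fin N) k) (i : ℕ) :
    Matrix (Fin n × Fin N) (Fin n × Fin N) k :=
  blk n N fun r c =>
    if r = i ∧ c = i then 0
    else if r = i ∧ c = i + 1 then s i * g i
    else if r = i + 1 ∧ c = i then s i
    else if r = i + 1 ∧ c = i + 1 then s i * (1 - g (i + 1))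
    else if r = c then s i
    else 0


def Sfun {N : ℕ} (g s : ℕ → Matrix (Fin N) (Fin N) k) (i : ℕ) (r c : ℕ) :
    Matrix (Fin N) (Fin N) k :=
  if r = i ∧ c = i then 0
  else if r = i ∧ c = i + 1 then s i * g i
  else if r = i + 1 ∧ c = i then s i
  else if r = i + 1 ∧ c = i + 1 then s i * (1 - g (i + 1))
  else if r = c then s i
  else 0

lemma Sfun_out {N : ℕ} (g s : ℕ → Matrix (Fin N) (Fin N) k) (i r c : ℕ)
    (h1 : r ≠ i) (h2 : r ≠ i + 1) :
    Sfun g s i r c = if r = c then s i else 0 := by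
  rw [Sfun, if_neg (fun h => h1 h.1), if_neg (fun h => h1 h.1),
    if_neg (fun h => h2 h.1), if_neg (fun h => h2 h.1)]

lemma Sfun_i {N : ℕ} (g s : ℕ → Matrix (Fin N) (Fin N) k) (i c : ℕ) :
    Sfun g s i i c = if c = i + 1 then s i * g i else 0 := by
  by_cases h1 : c = i
  · subst h1
    rw [Sfun, if_pos ⟨rfl, rfl⟩, if_neg (by omega)]
  by_cases h2 : c = i + 1
  · subst h2
    rw [Sfun, if_neg (fun h => absurd h.2 (by omega)), if_pos ⟨rfl, rfl⟩, if_pos rfl]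
  · rw [Sfun, if_neg (fun h => h1 h.2), if_neg (fun h => h2 h.2),
      if_neg (fun h => absurd h.1 (by omega)), if_neg (fun h => absurd h.1 (by omega)),
      if_neg (fun h => h1 h.symm), if_neg h2]

lemma Sfun_i1 {N : ℕ} (g s : ℕ → Matrix (Fin N) (Fin N) k) (i c : ℕ) :
    Sfun g s i (i+1) c = if c = i then s i else if c = i + 1 then s i * (1 - g (i+1)) else 0 := by
  by_cases h1 : c = i
  · subst h1
    rw [Sfun, if_neg (fun h => absurd h.1 (by omega)), if_neg (fun h => absurd h.1 (by omega)),
      if_pos ⟨rfl, rfl⟩, if_pos rfl]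
  by_cases h2 : c = i + 1
  · subst h2
    rw [Sfun, if_neg (fun h => absurd h.1 (by omega)), if_neg (fun h => absurd h.1 (by omega)),
      if_neg (fun h => h1 h.2), if_pos ⟨rfl, rfl⟩, if_neg h1, if_pos rfl]
  · rw [Sfun, if_neg (fun h => absurd h.1 (by omega)), if_neg (fun h => absurd h.1 (by omega)),
      if_neg (fun h => h1 h.2), if_neg (fun h => h2 h.2),
      if_neg (fun h => h2 h.symm), if_neg h1, if_neg h2]

lemma sum_row_out {n N : ℕ} (g s : ℕ → Matrix (Fin N) (Fin N) k) (i r : ℕ)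
    (hr : r < n) (h1 : r ≠ i) (h2 : r ≠ i + 1) (X : Fin n → Matrix (Fin N) (Fin N) k) :
    ∑ u : Fin n, Sfun g s i r u.1 * X u = s i * X ⟨r, hr⟩ := by
  rw [Fintype.sum_eq_single (⟨r, hr⟩ : Fin n)]
  · rw [Sfun_out g s i r r h1 h2, if_pos rfl]
  · intro u hu
    have h3 : r ≠ u.1 := by
      intro h; exact hu (Fin.ext h.symm)
    rw [Sfun_out g s i r u.1 h1 h2, if_neg h3, zero_mul]

lemma sum_row_i {n N : ℕ} (g s : ℕ → Matrix (Fin N) (Fin N) k) (i : ℕ)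
    (hi : i + 1 < n) (X : Fin n → Matrix (Fin N) (Fin N) k) :
    ∑ u : Fin n, Sfun g s i i u.1 * X u = s i * g i * X ⟨i+1, hi⟩ := by
  rw [Fintype.sum_eq_single (⟨i+1, hi⟩ : Fin n)]
  · rw [Sfun_i, if_pos rfl]
  · intro u hu
    have h3 : u.1 ≠ i + 1 := by
      intro h; exact hu (Fin.ext h)
    rw [Sfun_i, if_neg h3, zero_mul]

lemma sum_row_i1 {n N : ℕ} (g s : ℕ → Matrix (Fin N) (Fin N) k) (i : ℕ)
    (hi : i + 1 < n) (X : Fin n → Matrix (Fin N) (Fin N) k) :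
    ∑ u : Fin n, Sfun g s i (i+1) u.1 * X u
      = s i * X ⟨i, by omega⟩ + s i * (1 - g (i+1)) * X ⟨i+1, hi⟩ := by
  have hne : (⟨i, by omega⟩ : Fin n) ≠ ⟨i+1, hi⟩ :=
    Fin.ne_of_val_ne (Nat.ne_of_lt (Nat.lt_succ_self i))
  rw [Finset.sum_eq_add_of_mem (⟨i, by omega⟩ : Fin n) ⟨i+1, hi⟩ (Finset.mem_univ _)
    (Finset.mem_univ _) hne]
  · rw [Sfun_i1, Sfun_i1]
    simp
  · intro u _ ⟨hu1, hu2⟩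
    have h3 : u.1 ≠ i := fun h => hu1 (Fin.ext h)
    have h4 : u.1 ≠ i + 1 := fun h => hu2 (Fin.ext h)
    rw [Sfun_i1, if_neg h3, if_neg h4, zero_mul]


lemma blk_mul (n N : ℕ) (B C : ℕ → ℕ → Matrix (Fin N) (Fin N) k) :
    blk n N B * blk n N C = blk n N (fun r c => ∑ t : Fin n, B r t.1 * C t.1 c) := by
  ext p q
  simp [blk, Matrix.mul_apply, Matrix.sum_apply, Fintype.sum_prod_type]

lemma blk_ext (n N : ℕ) (B C : ℕ → ℕ → Matrix (Fin N) (Fin N) k)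
    (h : ∀ r c : Fin n, B r.1 c.1 = C r.1 c.1) : blk n N B = blk n N C := by
  ext p q
  simp only [blk, Matrix.of_apply]
  rw [h p.1 q.1]

/-- Braid relation for the Long–Moody matrices:
`S_i S_{i+1} S_i = S_{i+1} S_i S_{i+1}`. -/
theorem longMoody_braid_relation
    (N n : ℕ) (hN : 1 ≤ N) (hn : 2 ≤ n)
    (g s : ℕ → Matrix (Fin N) (Fin N) k) (lam : k) (hlam : lam ≠ 0)
    (hgu : ∀ j, j < n → IsUnit (g j))
    (hsu : ∀ i, i + 1 < n → IsUnit (s i))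
    (hbr1 : ∀ i, i + 2 < n → s i * s (i + 1) * s i = s (i + 1) * s i * s (i + 1))
    (hbr2 : ∀ i j, i + 1 < n → j + 1 < n → (i + 2 ≤ j ∨ j + 2 ≤ i) →
      s i * s j = s j * s i)
    (ha1 : ∀ i, i + 1 < n → s i * g i = g (i + 1) * s i)
    (ha2 : ∀ i, i + 1 < n → g (i + 1) * s i * g (i + 1) = g i * g (i + 1) * s i)
    (ha3 : ∀ i j, i + 1 < n → j < n → j ≠ i → j ≠ i + 1 → s i * g j = g j * s i) :
    ∀ i, i + 2 < n →
      S n N g s i * S n N g s (i + 1) * S n N g s i =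
        S n N g s (i + 1) * S n N g s i * S n N g s (i + 1) := by
  intro i hi
  have hi1 : i + 1 < n := by omega
  have hi2 : i + 1 + 1 < n := by omega
  have e1 := ha1 i hi1
  have e2 := ha1 (i+1) hi2
  have e4 := ha2 (i+1) hi2
  have e5 := hbr1 i hi
  have e6 := ha3 (i+1) i hi2 (by omega) (by omega) (by omega)
  have e7 := ha3 i (i+1+1) hi1 (by omega) (by omega) (by omega)
  have E1 : ∀ x, s i * (g i * x) = g (i+1) * (s i * x) := fun x => by
    rw [← mul_assoc, e1, mul_assoc]
  have E2 : ∀ x, s (i+1) * (g (i+1) * x) = g (i+1+1) * (s (i+1) * x) := fun x => by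
    rw [← mul_assoc, e2, mul_assoc]
  have E2t : s (i+1) * g (i+1) = g (i+1+1) * s (i+1) := e2
  have E4x : ∀ x, g (i+1+1) * (s (i+1) * (g (i+1+1) * x))
      = g (i+1) * (g (i+1+1) * (s (i+1) * x)) := fun x => by
    rw [← mul_assoc, ← mul_assoc, e4, mul_assoc, mul_assoc]
  have E4t : g (i+1+1) * (s (i+1) * g (i+1+1)) = g (i+1) * (g (i+1+1) * s (i+1)) := by
    rw [← mul_assoc, e4, mul_assoc]
  have E5x : ∀ x, s i * (s (i+1) * (s i * x)) = s (i+1) * (s i * (s (i+1) * x)) := fun x => by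
    rw [← mul_assoc, ← mul_assoc, e5, mul_assoc, mul_assoc]
  have E5t : s i * (s (i+1) * s i) = s (i+1) * (s i * s (i+1)) := by
    rw [← mul_assoc, e5, mul_assoc]
  have E6t : s (i+1) * g i = g i * s (i+1) := e6
  have E7x : ∀ x, s i * (g (i+1+1) * x) = g (i+1+1) * (s i * x) := fun x => by
    rw [← mul_assoc, e7, mul_assoc]
  have D1x : ∀ x, s (i+1) * (g (i+1) * (g (i+1+1) * x))
      = g (i+1) * (g (i+1+1) * (s (i+1) * x)) := fun x => by rw [E2, E4x]
  have D2x : ∀ x, s i * (s (i+1) * (g (i+1) * x))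
      = g (i+1+1) * (s i * (s (i+1) * x)) := fun x => by rw [E2, E7x]
  have D2t : s i * (s (i+1) * g (i+1)) = g (i+1+1) * (s i * s (i+1)) := by
    rw [E2t, E7x]
  have WL1 : s i * (g i * (s (i+1) * (g (i+1) * s i)))
      = g (i+1) * (g (i+1+1) * (s (i+1) * (s i * s (i+1)))) := by
    rw [E1, D2x, E5t]
  have WR1 : s (i+1) * (s i * (g i * (s (i+1) * g (i+1))))
      = g (i+1) * (g (i+1+1) * (s (i+1) * (s i * s (i+1)))) := by
    rw [E1, D2t, D1x]
  have Wm2 : s i * (s (i+1) * (s i * g i)) = s (i+1) * (g (i+1) * (s i * s (i+1))) := by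
    rw [E5x, E6t, E1]
  have A1 : s i * (s (i+1) * (g (i+1) * s i))
      = g (i+1+1) * (s (i+1) * (s i * s (i+1))) := by
    rw [D2x, E5t]
  have B1 : s (i+1) * (g (i+1) * (s i * s (i+1)))
      = g (i+1+1) * (s (i+1) * (s i * s (i+1))) := E2 _
  have A2 : s i * (g (i+1) * (s (i+1) * (g (i+1) * s i)))
      = g (i+1+1) * (s (i+1) * (s i * (s (i+1) * g (i+1+1)))) := by
    rw [E2, ← D1x, ← e7, D2x, E5x]
  have B2 : s (i+1) * (g (i+1) * (s i * (s (i+1) * g (i+1+1))))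
      = g (i+1+1) * (s (i+1) * (s i * (s (i+1) * g (i+1+1)))) := E2 _
  have C1 : s i * (s (i+1) * (s i * g (i+1)))
      = s (i+1) * (g (i+1+1) * (s i * s (i+1))) := by
    rw [E5x, E2t, E7x]
  have N2 : s i * (s (i+1) * (g (i+1+1) * s i))
      = s (i+1) * (s i * (s (i+1) * g (i+1+1))) := by
    rw [← e7, E5x]
  have N3 : s (i+1) * (s i * (s (i+1) * g (i+1)))
      = s (i+1) * (g (i+1+1) * (s i * s (i+1))) := by
    rw [E2t, E7x]
  have N4 : s (i+1) * (s i * (g (i+1) * (s (i+1) * g (i+1))))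
      = s (i+1) * (s i * (g (i+1) * (g (i+1+1) * s (i+1)))) := by
    rw [E2t]
  have N5 : s (i+1) * (g (i+1+1) * (s i * (s (i+1) * g (i+1+1))))
      = s (i+1) * (s i * (g (i+1) * (g (i+1+1) * s (i+1)))) := by
    rw [← E7x, E4t]
  have hS : ∀ j, S n N g s j = blk n N (Sfun g s j) := fun j => rfl
  rw [hS i, hS (i+1), mul_assoc, mul_assoc, blk_mul, blk_mul, blk_mul, blk_mul]
  apply blk_ext
  intro r c
  obtain ⟨rv, hrv⟩ := r
  obtain ⟨cv, hcv⟩ := c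
  dsimp only
  by_cases hr1 : rv = i
  · rw [hr1]
    rw [sum_row_i g s i hi1]
    rw [sum_row_out g s (i+1) i (by omega) (by omega) (by omega)]
    dsimp only
    rw [sum_row_i g s (i+1) hi2]
    rw [sum_row_i g s i hi1]
    dsimp only
    rw [Sfun_out g s i (i+1+1) cv (by omega) (by omega), Sfun_i g s (i+1) cv]
    split_ifs <;> first
      | (exfalso; omega)
      | (simp only [mul_zero, zero_mul, add_zero, zero_add, mul_add, add_mul, mul_sub,
          sub_mul, mul_one, one_mul, mul_assoc, WL1, WR1, Wm2, A1, B1, A2, B2, C1, N2,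
          N3, N4, N5, E5t] <;>
         first | rfl | abel)
  by_cases hr2 : rv = i + 1
  · rw [hr2]
    rw [sum_row_i1 g s i hi1]
    rw [sum_row_i g s (i+1) hi2]
    dsimp only
    rw [sum_row_out g s (i+1) i (by omega) (by omega) (by omega)]
    rw [sum_row_i g s (i+1) hi2]
    rw [sum_row_out g s i (i+1+1) (by omega) (by omega) (by omega)]
    dsimp only
    rw [Sfun_i g s i cv, Sfun_out g s i (i+1+1) cv (by omega) (by omega),
      Sfun_i1 g s (i+1) cv]
    split_ifs <;> first
      | (exfalso; omega)
      | (simp only [mul_zero, zero_mul, add_zero, zero_add, mul_add, add_mul, mul_sub,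
          sub_mul, mul_one, one_mul, mul_assoc, WL1, WR1, Wm2, A1, B1, A2, B2, C1, N2,
          N3, N4, N5, E5t] <;>
         first | rfl | abel)
  by_cases hr3 : rv = i + 1 + 1
  · rw [hr3]
    rw [sum_row_out g s i (i+1+1) (by omega) (by omega) (by omega)]
    rw [sum_row_i1 g s (i+1) hi2]
    dsimp only
    rw [sum_row_i1 g s (i+1) hi2]
    rw [sum_row_i1 g s i hi1]
    rw [sum_row_out g s i (i+1+1) (by omega) (by omega) (by omega)]
    dsimp only
    rw [Sfun_i1 g s i cv, Sfun_out g s i (i+1+1) cv (by omega) (by omega),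
      Sfun_out g s (i+1) i cv (by omega) (by omega), Sfun_i g s (i+1) cv,
      Sfun_i1 g s (i+1) cv]
    split_ifs <;> first
      | (exfalso; omega)
      | (simp only [mul_zero, zero_mul, add_zero, zero_add, mul_add, add_mul, mul_sub,
          sub_mul, mul_one, one_mul, mul_assoc, WL1, WR1, Wm2, A1, B1, A2, B2, C1, N2,
          N3, N4, N5, E5t] <;>
         first | rfl | abel)
  · rw [sum_row_out g s i rv hrv hr1 hr2]
    rw [sum_row_out g s (i+1) rv hrv (by omega) (by omega)]
    dsimp only
    rw [sum_row_out g s (i+1) rv hrv (by omega) (by omega)]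
    rw [sum_row_out g s i rv hrv hr1 hr2]
    dsimp only
    rw [Sfun_out g s i rv cv hr1 hr2, Sfun_out g s (i+1) rv cv (by omega) (by omega)]
    split_ifs <;> first
      | (exfalso; omega)
      | (simp only [mul_zero, zero_mul, mul_assoc, E5t] <;> first | rfl | abel)

end KLM
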